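/- Let (n_k)_{k≥1} be a lacunary sequence of positive integers, let (c_{k,N})_{1≤k≤N} satisfy Assumption (A2), and assume Assumption (A4) holds. Then for every mean-zero trigonometric polynomial p(x) = Σ_{j=1}^d [a_j cos(2πjx) + b_j sin(2πjx)], one has ‖Σ_{k≤N} c_{k,N} p(n_k x)‖₂² = ‖p‖₂²·h(N)·(1 + o(1)) as N → ∞; in particular ‖Σ_{k≤N} c_{k,N} p(n_k x)‖₂²/h(N) → ‖p‖₂² = (1/2)·Σ_{j=1}^d (a_j² + b_j²). -/

import Mathlib

open MeasureTheory Filter Real Set Finset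

/-- A sequence of positive integers is lacunary: liminf n_{k+1}/n_k ≥ q for some q > 1. -/
def IsLacunary (n : ℕ → ℕ) : Prop :=
  ∃ q : ℝ, 1 < q ∧ ∀ r : ℝ, r < q → ∀ᶠ k in Filter.atTop, r * (n k : ℝ) ≤ (n (k + 1) : ℝ)

/-- The mean-zero trigonometric polynomial p(x) = Σ_{j=1}^d (a_j cos(2πjx) + b_j sin(2πjx)). -/
noncomputable def trigPoly (d : ℕ) (a b : ℕ → ℝ) (x : ℝ) : ℝ :=
  ∑ j ∈ Finset.Icc 1 d,
    (a j * Real.cos (2 * Real.pi * j * x) + b j * Real.sin (2 * Real.pi * j * x))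

lemma int_cos_freq (r : ℤ) :
    ∫ x in (0:ℝ)..1, Real.cos (2 * π * r * x) = if r = 0 then 1 else 0 := by
  rcases eq_or_ne r 0 with h | h
  · simp [h]
  · have hc : (2 * π * (r:ℝ)) ≠ 0 :=
      mul_ne_zero (by positivity) (Int.cast_ne_zero.mpr h)
    have hF : ∀ x ∈ Set.uIcc (0:ℝ) 1, HasDerivAt
        (fun y => Real.sin (2 * π * r * y) / (2 * π * r)) (Real.cos (2 * π * r * x)) x := by
      intro x _
      have h1 : HasDerivAt (fun y : ℝ => 2 * π * (r:ℝ) * y) (2 * π * r * 1) x :=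
        (hasDerivAt_id x).const_mul _
      have h2 := (Real.hasDerivAt_sin (2 * π * r * x)).comp x h1
      have h3 := h2.div_const (2 * π * r)
      convert h3 using 1
      rfl
      rfl
      rfl
      rw [mul_one, mul_div_assoc, div_self hc, mul_one]
    rw [intervalIntegral.integral_eq_sub_of_hasDerivAt hF
      ((Real.continuous_cos.comp (by continuity)).intervalIntegrable 0 1)]
    have hs : Real.sin (2 * π * r * 1) = 0 := by
      have := Real.sin_int_mul_pi (2 * r)
      push_cast at this ⊢
      rw [mul_one]
      convert this using 2
      ring
    rw [mul_one] at hs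
    simp [hs, h]

lemma int_sin_freq (r : ℤ) :
    ∫ x in (0:ℝ)..1, Real.sin (2 * π * r * x) = 0 := by
  rcases eq_or_ne r 0 with h | h
  · simp [h]
  · have hc : (2 * π * (r:ℝ)) ≠ 0 :=
      mul_ne_zero (by positivity) (Int.cast_ne_zero.mpr h)
    have hF : ∀ x ∈ Set.uIcc (0:ℝ) 1, HasDerivAt
        (fun y => -Real.cos (2 * π * r * y) / (2 * π * r)) (Real.sin (2 * π * r * x)) x := by
      intro x _
      have h1 : HasDerivAt (fun y : ℝ => 2 * π * (r:ℝ) * y) (2 * π * r * 1) x :=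
        (hasDerivAt_id x).const_mul _
      have h2 := ((Real.hasDerivAt_cos (2 * π * r * x)).comp x h1).neg.div_const (2 * π * r)
      convert h2 using 1
      rfl
      rfl
      rfl
      rw [mul_one, neg_mul, neg_neg, mul_div_assoc, div_self hc, mul_one]
    rw [intervalIntegral.integral_eq_sub_of_hasDerivAt hF
      ((Real.continuous_sin.comp (by continuity)).intervalIntegrable 0 1)]
    have hcc : Real.cos (2 * π * r * 1) = 1 := by
      have := Real.cos_int_mul_two_pi r
      push_cast at this ⊢
      rw [mul_one]
      convert this using 2
      ring
    rw [mul_one] at hcc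
    simp [hcc]

lemma ii_cos (r : ℤ) : IntervalIntegrable (fun x : ℝ => Real.cos (2 * π * r * x))
    MeasureTheory.volume 0 1 :=
  (Real.continuous_cos.comp (by continuity)).intervalIntegrable 0 1

lemma ii_sin (r : ℤ) : IntervalIntegrable (fun x : ℝ => Real.sin (2 * π * r * x))
    MeasureTheory.volume 0 1 :=
  (Real.continuous_sin.comp (by continuity)).intervalIntegrable 0 1

lemma int_cc (m m' : ℤ) (hm : 0 < m) (hm' : 0 < m') :
    ∫ x in (0:ℝ)..1, Real.cos (2 * π * m * x) * Real.cos (2 * π * m' * x)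
      = if m = m' then 1 / 2 else 0 := by
  have key : ∀ x : ℝ, Real.cos (2 * π * m * x) * Real.cos (2 * π * m' * x)
      = (Real.cos (2 * π * ((m - m' : ℤ) : ℝ) * x) + Real.cos (2 * π * ((m + m' : ℤ) : ℝ) * x)) / 2 := by
    intro x
    have h1 := Real.cos_sub (2 * π * m * x) (2 * π * m' * x)
    have h2 := Real.cos_add (2 * π * m * x) (2 * π * m' * x)
    have e1 : 2 * π * ((m - m' : ℤ) : ℝ) * x = 2 * π * m * x - 2 * π * m' * x := by push_cast; ring
    have e2 : 2 * π * ((m + m' : ℤ) : ℝ) * x = 2 * π * m * x + 2 * π * m' * x := by push_cast; ring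
    rw [e1, e2, h1, h2]; ring
  rw [intervalIntegral.integral_congr (fun x _ => key x), intervalIntegral.integral_div,
    intervalIntegral.integral_add (ii_cos _) (ii_cos _), int_cos_freq, int_cos_freq]
  have h2 : m + m' ≠ 0 := by omega
  simp only [h2, if_false, sub_eq_zero]
  split_ifs <;> norm_num

lemma int_ss (m m' : ℤ) (hm : 0 < m) (hm' : 0 < m') :
    ∫ x in (0:ℝ)..1, Real.sin (2 * π * m * x) * Real.sin (2 * π * m' * x)
      = if m = m' then 1 / 2 else 0 := by
  have key : ∀ x : ℝ, Real.sin (2 * π * m * x) * Real.sin (2 * π * m' * x)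
      = (Real.cos (2 * π * ((m - m' : ℤ) : ℝ) * x) - Real.cos (2 * π * ((m + m' : ℤ) : ℝ) * x)) / 2 := by
    intro x
    have h1 := Real.cos_sub (2 * π * m * x) (2 * π * m' * x)
    have h2 := Real.cos_add (2 * π * m * x) (2 * π * m' * x)
    have e1 : 2 * π * ((m - m' : ℤ) : ℝ) * x = 2 * π * m * x - 2 * π * m' * x := by push_cast; ring
    have e2 : 2 * π * ((m + m' : ℤ) : ℝ) * x = 2 * π * m * x + 2 * π * m' * x := by push_cast; ring
    rw [e1, e2, h1, h2]; ring
  rw [intervalIntegral.integral_congr (fun x _ => key x), intervalIntegral.integral_div,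
    intervalIntegral.integral_sub (ii_cos _) (ii_cos _), int_cos_freq, int_cos_freq]
  have h2 : m + m' ≠ 0 := by omega
  simp only [h2, if_false, sub_eq_zero]
  split_ifs <;> norm_num

lemma int_sc (m m' : ℤ) :
    ∫ x in (0:ℝ)..1, Real.sin (2 * π * m * x) * Real.cos (2 * π * m' * x) = 0 := by
  have key : ∀ x : ℝ, Real.sin (2 * π * m * x) * Real.cos (2 * π * m' * x)
      = (Real.sin (2 * π * ((m + m' : ℤ) : ℝ) * x) + Real.sin (2 * π * ((m - m' : ℤ) : ℝ) * x)) / 2 := by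
    intro x
    have h1 := Real.sin_add (2 * π * m * x) (2 * π * m' * x)
    have h2 := Real.sin_sub (2 * π * m * x) (2 * π * m' * x)
    have e1 : 2 * π * ((m - m' : ℤ) : ℝ) * x = 2 * π * m * x - 2 * π * m' * x := by push_cast; ring
    have e2 : 2 * π * ((m + m' : ℤ) : ℝ) * x = 2 * π * m * x + 2 * π * m' * x := by push_cast; ring
    rw [e1, e2, h1, h2]; ring
  rw [intervalIntegral.integral_congr (fun x _ => key x), intervalIntegral.integral_div,
    intervalIntegral.integral_add (ii_sin _) (ii_sin _), int_sin_freq, int_sin_freq]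
  norm_num

lemma int_cs (m m' : ℤ) :
    ∫ x in (0:ℝ)..1, Real.cos (2 * π * m * x) * Real.sin (2 * π * m' * x) = 0 := by
  rw [intervalIntegral.integral_congr (fun x _ => mul_comm _ _), int_sc m' m]

lemma cont_cos (r : ℤ) : Continuous fun x : ℝ => Real.cos (2 * π * r * x) :=
  Real.continuous_cos.comp (by continuity)

lemma cont_sin (r : ℤ) : Continuous fun x : ℝ => Real.sin (2 * π * r * x) :=
  Real.continuous_sin.comp (by continuity)

lemma term_int (m m' : ℤ) (hm : 0 < m) (hm' : 0 < m') (A B A' B' : ℝ) :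
    ∫ x in (0:ℝ)..1,
        (A * Real.cos (2 * π * m * x) + B * Real.sin (2 * π * m * x)) *
          (A' * Real.cos (2 * π * m' * x) + B' * Real.sin (2 * π * m' * x))
      = if m = m' then (A * A' + B * B') / 2 else 0 := by
  have key : Set.EqOn
      (fun x => (A * Real.cos (2 * π * m * x) + B * Real.sin (2 * π * m * x)) *
          (A' * Real.cos (2 * π * m' * x) + B' * Real.sin (2 * π * m' * x)))
      (fun x => A * A' * (Real.cos (2 * π * m * x) * Real.cos (2 * π * m' * x)) +
        (A * B' * (Real.cos (2 * π * m * x) * Real.sin (2 * π * m' * x)) +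
        (B * A' * (Real.sin (2 * π * m * x) * Real.cos (2 * π * m' * x)) +
         B * B' * (Real.sin (2 * π * m * x) * Real.sin (2 * π * m' * x)))))
      (Set.uIcc 0 1) := fun x _ => by ring
  have i1 : IntervalIntegrable
      (fun x => A * A' * (Real.cos (2 * π * m * x) * Real.cos (2 * π * m' * x)))
      MeasureTheory.volume 0 1 :=
    ((continuous_const.mul ((cont_cos m).mul (cont_cos m')))).intervalIntegrable 0 1
  have i2 : IntervalIntegrable
      (fun x => A * B' * (Real.cos (2 * π * m * x) * Real.sin (2 * π * m' * x)))
      MeasureTheory.volume 0 1 :=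
    ((continuous_const.mul ((cont_cos m).mul (cont_sin m')))).intervalIntegrable 0 1
  have i3 : IntervalIntegrable
      (fun x => B * A' * (Real.sin (2 * π * m * x) * Real.cos (2 * π * m' * x)))
      MeasureTheory.volume 0 1 :=
    ((continuous_const.mul ((cont_sin m).mul (cont_cos m')))).intervalIntegrable 0 1
  have i4 : IntervalIntegrable
      (fun x => B * B' * (Real.sin (2 * π * m * x) * Real.sin (2 * π * m' * x)))
      MeasureTheory.volume 0 1 :=
    ((continuous_const.mul ((cont_sin m).mul (cont_sin m')))).intervalIntegrable 0 1
  rw [intervalIntegral.integral_congr key,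
    intervalIntegral.integral_add i1 (i2.add (i3.add i4)),
    intervalIntegral.integral_add i2 (i3.add i4),
    intervalIntegral.integral_add i3 i4,
    intervalIntegral.integral_const_mul, intervalIntegral.integral_const_mul,
    intervalIntegral.integral_const_mul, intervalIntegral.integral_const_mul,
    int_cc m m' hm hm', int_cs, int_sc, int_ss m m' hm hm']
  split_ifs <;> ring

lemma cont_trig (d : ℕ) (a b : ℕ → ℝ) : Continuous (trigPoly d a b) := by
  unfold trigPoly
  apply continuous_finset_sum
  intro j _
  continuity

set_option maxHeartbeats 1000000 in
lemma pair_int (d : ℕ) (a b : ℕ → ℝ) (u v : ℕ) (hu : 0 < u) (hv : 0 < v) :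
    ∫ x in (0:ℝ)..1, trigPoly d a b (u * x) * trigPoly d a b (v * x)
      = ∑ j ∈ Finset.Icc 1 d, ∑ j' ∈ Finset.Icc 1 d,
          (if (j : ℤ) * u = (j' : ℤ) * v then (a j * a j' + b j * b j') / 2 else 0) := by
  have expand : Set.EqOn (fun x => trigPoly d a b (u * x) * trigPoly d a b (v * x))
      (fun x => ∑ j ∈ Finset.Icc 1 d, ∑ j' ∈ Finset.Icc 1 d,
        (a j * Real.cos (2 * π * (((j * u : ℕ) : ℤ) : ℝ) * x) +
           b j * Real.sin (2 * π * (((j * u : ℕ) : ℤ) : ℝ) * x)) *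
        (a j' * Real.cos (2 * π * (((j' * v : ℕ) : ℤ) : ℝ) * x) +
           b j' * Real.sin (2 * π * (((j' * v : ℕ) : ℤ) : ℝ) * x)))
      (Set.uIcc 0 1) := by
    intro x _
    simp only [trigPoly, Finset.sum_mul_sum]
    apply Finset.sum_congr rfl; intro j _; apply Finset.sum_congr rfl; intro j' _
    have e1 : 2 * π * (j:ℝ) * ((u:ℝ) * x) = 2 * π * (((j * u : ℕ) : ℤ) : ℝ) * x := by
      push_cast; ring
    have e2 : 2 * π * (j':ℝ) * ((v:ℝ) * x) = 2 * π * (((j' * v : ℕ) : ℤ) : ℝ) * x := by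
      push_cast; ring
    rw [e1, e2]
  have iterm : ∀ (j j' : ℕ), IntervalIntegrable
      (fun x => (a j * Real.cos (2 * π * (((j * u : ℕ) : ℤ) : ℝ) * x) +
           b j * Real.sin (2 * π * (((j * u : ℕ) : ℤ) : ℝ) * x)) *
        (a j' * Real.cos (2 * π * (((j' * v : ℕ) : ℤ) : ℝ) * x) +
           b j' * Real.sin (2 * π * (((j' * v : ℕ) : ℤ) : ℝ) * x)))
      MeasureTheory.volume 0 1 := by
    intro j j'
    apply Continuous.intervalIntegrable
    apply Continuous.mul
    · exact (continuous_const.mul (cont_cos _)).add (continuous_const.mul (cont_sin _))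
    · exact (continuous_const.mul (cont_cos _)).add (continuous_const.mul (cont_sin _))
  have iouter : ∀ j ∈ Finset.Icc 1 d, IntervalIntegrable
      (fun x => ∑ j' ∈ Finset.Icc 1 d,
        (a j * Real.cos (2 * π * (((j * u : ℕ) : ℤ) : ℝ) * x) +
           b j * Real.sin (2 * π * (((j * u : ℕ) : ℤ) : ℝ) * x)) *
        (a j' * Real.cos (2 * π * (((j' * v : ℕ) : ℤ) : ℝ) * x) +
           b j' * Real.sin (2 * π * (((j' * v : ℕ) : ℤ) : ℝ) * x)))
      MeasureTheory.volume 0 1 :=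
    fun j _ => Continuous.intervalIntegrable (continuous_finset_sum _ (fun j' _ =>
      ((continuous_const.mul (cont_cos _)).add (continuous_const.mul (cont_sin _))).mul
        ((continuous_const.mul (cont_cos _)).add (continuous_const.mul (cont_sin _))))) 0 1
  rw [intervalIntegral.integral_congr expand,
    intervalIntegral.integral_finset_sum iouter]
  apply Finset.sum_congr rfl; intro j hj
  rw [intervalIntegral.integral_finset_sum (fun j' _ => iterm j j')]
  apply Finset.sum_congr rfl; intro j' hj'
  have hjpos : 0 < j := (Finset.mem_Icc.mp hj).1
  have hj'pos : 0 < j' := (Finset.mem_Icc.mp hj').1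
  rw [term_int ((j * u : ℕ) : ℤ) ((j' * v : ℕ) : ℤ)
    (by positivity) (by positivity) (a j) (b j) (a j') (b j')]
  push_cast
  rfl

lemma cont_trig_comp (d : ℕ) (a b : ℕ → ℝ) (u : ℕ) :
    Continuous fun x : ℝ => trigPoly d a b ((u : ℝ) * x) :=
  (cont_trig d a b).comp (continuous_const.mul continuous_id)

set_option maxHeartbeats 1000000 in
lemma main_int (d : ℕ) (a b : ℕ → ℝ) (n : ℕ → ℕ) (hn : ∀ k, 0 < n k) (N : ℕ) (c : ℕ → ℝ) :
    ∫ x in Set.Ico (0:ℝ) 1, (∑ k ∈ Finset.Icc 1 N, c k * trigPoly d a b ((n k : ℝ) * x)) ^ 2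
      = ∑ k ∈ Finset.Icc 1 N, ∑ l ∈ Finset.Icc 1 N, (c k * c l) *
          ∑ j ∈ Finset.Icc 1 d, ∑ j' ∈ Finset.Icc 1 d,
            (if (j : ℤ) * n k = (j' : ℤ) * n l then (a j * a j' + b j * b j') / 2 else 0) := by
  have hIco : ∫ x in Set.Ico (0:ℝ) 1,
      (∑ k ∈ Finset.Icc 1 N, c k * trigPoly d a b ((n k : ℝ) * x)) ^ 2
      = ∫ x in (0:ℝ)..1, (∑ k ∈ Finset.Icc 1 N, c k * trigPoly d a b ((n k : ℝ) * x)) ^ 2 := by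
    rw [intervalIntegral.integral_of_le zero_le_one, integral_Ico_eq_integral_Ioo,
      integral_Ioc_eq_integral_Ioo]
  rw [hIco]
  have expand : Set.EqOn
      (fun x => (∑ k ∈ Finset.Icc 1 N, c k * trigPoly d a b ((n k : ℝ) * x)) ^ 2)
      (fun x => ∑ k ∈ Finset.Icc 1 N, ∑ l ∈ Finset.Icc 1 N,
        (c k * c l) * (trigPoly d a b ((n k : ℝ) * x) * trigPoly d a b ((n l : ℝ) * x)))
      (Set.uIcc 0 1) := by
    intro x _
    simp only [sq, Finset.sum_mul_sum]
    apply Finset.sum_congr rfl; intro k _; apply Finset.sum_congr rfl; intro l _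
    ring
  have ikl : ∀ (k l : ℕ), IntervalIntegrable
      (fun x => (c k * c l) * (trigPoly d a b ((n k : ℝ) * x) * trigPoly d a b ((n l : ℝ) * x)))
      MeasureTheory.volume 0 1 :=
    fun k l => (continuous_const.mul
      ((cont_trig_comp d a b (n k)).mul (cont_trig_comp d a b (n l)))).intervalIntegrable 0 1
  have iouter : ∀ k ∈ Finset.Icc 1 N, IntervalIntegrable
      (fun x => ∑ l ∈ Finset.Icc 1 N,
        (c k * c l) * (trigPoly d a b ((n k : ℝ) * x) * trigPoly d a b ((n l : ℝ) * x)))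
      MeasureTheory.volume 0 1 :=
    fun k _ => Continuous.intervalIntegrable (continuous_finset_sum _ (fun l _ =>
      continuous_const.mul
        ((cont_trig_comp d a b (n k)).mul (cont_trig_comp d a b (n l))))) 0 1
  rw [intervalIntegral.integral_congr expand, intervalIntegral.integral_finset_sum iouter]
  apply Finset.sum_congr rfl; intro k _
  rw [intervalIntegral.integral_finset_sum (fun l _ => ikl k l)]
  apply Finset.sum_congr rfl; intro l _
  rw [intervalIntegral.integral_const_mul, pair_int d a b (n k) (n l) (hn k) (hn l)]

lemma diag_sum (d : ℕ) (a b : ℕ → ℝ) (m : ℕ) (hm : 0 < m) :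
    ∑ j ∈ Finset.Icc 1 d, ∑ j' ∈ Finset.Icc 1 d,
        (if (j : ℤ) * m = (j' : ℤ) * m then (a j * a j' + b j * b j') / 2 else 0)
      = ∑ j ∈ Finset.Icc 1 d, (a j ^ 2 + b j ^ 2) / 2 := by
  apply Finset.sum_congr rfl; intro j hj
  have hiff : ∀ j' : ℕ, ((j : ℤ) * m = (j' : ℤ) * m) ↔ j' = j := by
    intro j'
    have hm' : (m : ℤ) ≠ 0 := by exact_mod_cast hm.ne'
    constructor
    · intro h
      have := mul_right_cancel₀ hm' h
      exact_mod_cast this.symm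
    · intro h; rw [h]
  calc ∑ j' ∈ Finset.Icc 1 d,
        (if (j : ℤ) * m = (j' : ℤ) * m then (a j * a j' + b j * b j') / 2 else 0)
      = ∑ j' ∈ Finset.Icc 1 d, (if j' = j then (a j * a j' + b j * b j') / 2 else 0) := by
        apply Finset.sum_congr rfl; intro j' _
        rw [if_congr (hiff j') rfl rfl]
    _ = (a j * a j + b j * b j) / 2 := by
        rw [Finset.sum_ite_eq' (Finset.Icc 1 d) j (fun j' => (a j * a j' + b j * b j') / 2),
          if_pos hj]
    _ = (a j ^ 2 + b j ^ 2) / 2 := by ring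

theorem variance_asymptotics
    (n : ℕ → ℕ) (c : ℕ → ℕ → ℝ)
    (hpos : ∀ k, 0 < n k) (hlac : IsLacunary n)
    -- Assumption (A2)
    (hc0 : ∀ N k, 0 ≤ c N k) (hc1 : ∀ N k, c N k ≤ 1)
    (hh : Tendsto (fun N => ∑ k ∈ Finset.Icc 1 N, c N k ^ 2) atTop atTop)
    -- Assumption (A4): L*(N,d) = o(h(N)): the inhomogeneous part ...
    (hdio : ∀ d : ℕ, ∀ ε : ℝ, 0 < ε → ∀ᶠ N in atTop, ∀ m : ℕ, 0 < m →
      ∑ k ∈ Finset.Icc 1 N, ∑ l ∈ Finset.Icc 1 N,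
        ∑ j ∈ Finset.Icc 1 d, ∑ j' ∈ Finset.Icc 1 d,
          c N k * c N l * (if (j : ℤ) * n k - (j' : ℤ) * n l = (m : ℤ) then 1 else 0)
      ≤ ε * ∑ k ∈ Finset.Icc 1 N, c N k ^ 2)
    -- ... together with the homogeneous (off-diagonal) part
    (hhom : ∀ d : ℕ, ∀ ε : ℝ, 0 < ε → ∀ᶠ N in atTop,
      ∑ k ∈ Finset.Icc 1 N, ∑ l ∈ Finset.Icc 1 N,
        ∑ j ∈ Finset.Icc 1 d, ∑ j' ∈ Finset.Icc 1 d,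
          c N k * c N l * (if k ≠ l ∧ (j : ℤ) * n k - (j' : ℤ) * n l = 0 then 1 else 0)
      ≤ ε * ∑ k ∈ Finset.Icc 1 N, c N k ^ 2) :
    ∀ (d : ℕ) (a b : ℕ → ℝ),
      Tendsto (fun N =>
          (∫ x in Set.Ico (0:ℝ) 1,
              (∑ k ∈ Finset.Icc 1 N, c N k * trigPoly d a b ((n k : ℝ) * x)) ^ 2) /
            (∑ k ∈ Finset.Icc 1 N, c N k ^ 2))
        atTop (nhds ((1 / 2) * ∑ j ∈ Finset.Icc 1 d, (a j ^ 2 + b j ^ 2))) := by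
  intro d a b
  -- notation
  set W : ℕ → ℕ → ℝ := fun k l => ∑ j ∈ Finset.Icc 1 d, ∑ j' ∈ Finset.Icc 1 d,
    (if (j : ℤ) * n k = (j' : ℤ) * n l then (a j * a j' + b j * b j') / 2 else 0) with hWdef
  set T : ℝ := ∑ j ∈ Finset.Icc 1 d, (a j ^ 2 + b j ^ 2) / 2 with hTdef
  set C : ℝ := 1 + ∑ j ∈ Finset.Icc 1 d, ∑ j' ∈ Finset.Icc 1 d,
    |(a j * a j' + b j * b j') / 2| with hCdef
  have hC : 0 < C := by
    have : (0:ℝ) ≤ ∑ j ∈ Finset.Icc 1 d, ∑ j' ∈ Finset.Icc 1 d,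
        |(a j * a j' + b j * b j') / 2| :=
      Finset.sum_nonneg fun _ _ => Finset.sum_nonneg fun _ _ => abs_nonneg _
    rw [hCdef]; linarith
  have hwb : ∀ j ∈ Finset.Icc 1 d, ∀ j' ∈ Finset.Icc 1 d,
      |(a j * a j' + b j * b j') / 2| ≤ C := by
    intro j hj j' hj'
    have h1 : |(a j * a j' + b j * b j') / 2|
        ≤ ∑ i' ∈ Finset.Icc 1 d, |(a j * a i' + b j * b i') / 2| :=
      Finset.single_le_sum (f := fun i' => |(a j * a i' + b j * b i') / 2|)
        (fun i _ => abs_nonneg _) hj'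
    have h2 : ∑ i' ∈ Finset.Icc 1 d, |(a j * a i' + b j * b i') / 2|
        ≤ ∑ i ∈ Finset.Icc 1 d, ∑ i' ∈ Finset.Icc 1 d, |(a i * a i' + b i * b i') / 2| :=
      Finset.single_le_sum (f := fun i => ∑ i' ∈ Finset.Icc 1 d, |(a i * a i' + b i * b i') / 2|)
        (fun i _ => Finset.sum_nonneg fun _ _ => abs_nonneg _) hj
    rw [hCdef]; linarith
  have hdiagW : ∀ k, W k k = T := fun k => diag_sum d a b (n k) (hpos k)
  -- the integral formula
  have hmain : ∀ N, (∫ x in Set.Ico (0:ℝ) 1,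
      (∑ k ∈ Finset.Icc 1 N, c N k * trigPoly d a b ((n k : ℝ) * x)) ^ 2)
      = ∑ k ∈ Finset.Icc 1 N, ∑ l ∈ Finset.Icc 1 N, (c N k * c N l) * W k l :=
    fun N => main_int d a b n hpos N (c N)
  -- splitting off the diagonal
  have hsplit : ∀ N,
      (∑ k ∈ Finset.Icc 1 N, ∑ l ∈ Finset.Icc 1 N, (c N k * c N l) * W k l)
        - T * (∑ k ∈ Finset.Icc 1 N, c N k ^ 2)
      = ∑ k ∈ Finset.Icc 1 N, ∑ l ∈ Finset.Icc 1 N,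
          (if l = k then 0 else (c N k * c N l) * W k l) := by
    intro N
    have hTh : T * (∑ k ∈ Finset.Icc 1 N, c N k ^ 2)
        = ∑ k ∈ Finset.Icc 1 N, ∑ l ∈ Finset.Icc 1 N,
            (if l = k then (c N k * c N l) * W k l else 0) := by
      rw [Finset.mul_sum]
      apply Finset.sum_congr rfl; intro k hk
      rw [Finset.sum_ite_eq' (Finset.Icc 1 N) k (fun l => (c N k * c N l) * W k l), if_pos hk,
        hdiagW k]
      ring
    rw [hTh, ← Finset.sum_sub_distrib]
    apply Finset.sum_congr rfl; intro k _
    rw [← Finset.sum_sub_distrib]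
    apply Finset.sum_congr rfl; intro l _
    split_ifs <;> ring
  -- the off-diagonal bound
  have hbound : ∀ N,
      |∑ k ∈ Finset.Icc 1 N, ∑ l ∈ Finset.Icc 1 N,
          (if l = k then 0 else (c N k * c N l) * W k l)|
      ≤ C * ∑ k ∈ Finset.Icc 1 N, ∑ l ∈ Finset.Icc 1 N,
          ∑ j ∈ Finset.Icc 1 d, ∑ j' ∈ Finset.Icc 1 d,
            c N k * c N l * (if k ≠ l ∧ (j : ℤ) * n k - (j' : ℤ) * n l = 0 then 1 else 0) := by
    intro N
    have hterm : ∀ k l : ℕ, |if l = k then 0 else (c N k * c N l) * W k l|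
        ≤ C * ∑ j ∈ Finset.Icc 1 d, ∑ j' ∈ Finset.Icc 1 d,
            c N k * c N l * (if k ≠ l ∧ (j : ℤ) * n k - (j' : ℤ) * n l = 0 then 1 else 0) := by
      intro k l
      have hind_nonneg : (0:ℝ) ≤ ∑ j ∈ Finset.Icc 1 d, ∑ j' ∈ Finset.Icc 1 d,
          c N k * c N l * (if k ≠ l ∧ (j : ℤ) * n k - (j' : ℤ) * n l = 0 then 1 else 0) := by
        apply Finset.sum_nonneg; intro j _; apply Finset.sum_nonneg; intro j' _
        apply mul_nonneg (mul_nonneg (hc0 N k) (hc0 N l))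
        split_ifs <;> norm_num
      by_cases hlk : l = k
      · rw [if_pos hlk, abs_zero]
        exact mul_nonneg hC.le hind_nonneg
      · rw [if_neg hlk]
        have hkl : k ≠ l := fun h => hlk h.symm
        have hWb : |W k l| ≤ ∑ j ∈ Finset.Icc 1 d, ∑ j' ∈ Finset.Icc 1 d,
            C * (if k ≠ l ∧ (j : ℤ) * n k - (j' : ℤ) * n l = 0 then 1 else 0) := by
          refine (Finset.abs_sum_le_sum_abs _ _).trans ?_
          apply Finset.sum_le_sum; intro j hj
          refine (Finset.abs_sum_le_sum_abs _ _).trans ?_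
          apply Finset.sum_le_sum; intro j' hj'
          by_cases hcond : (j : ℤ) * n k = (j' : ℤ) * n l
          · rw [if_pos hcond, if_pos ⟨hkl, sub_eq_zero.mpr hcond⟩, mul_one]
            exact hwb j hj j' hj'
          · rw [if_neg hcond, abs_zero, if_neg (fun h => hcond (sub_eq_zero.mp h.2)), mul_zero]
        calc |(c N k * c N l) * W k l| = (c N k * c N l) * |W k l| := by
              rw [abs_mul, abs_of_nonneg (mul_nonneg (hc0 N k) (hc0 N l))]
          _ ≤ (c N k * c N l) * ∑ j ∈ Finset.Icc 1 d, ∑ j' ∈ Finset.Icc 1 d,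
                C * (if k ≠ l ∧ (j : ℤ) * n k - (j' : ℤ) * n l = 0 then 1 else 0) :=
              mul_le_mul_of_nonneg_left hWb (mul_nonneg (hc0 N k) (hc0 N l))
          _ = C * ∑ j ∈ Finset.Icc 1 d, ∑ j' ∈ Finset.Icc 1 d,
                c N k * c N l * (if k ≠ l ∧ (j : ℤ) * n k - (j' : ℤ) * n l = 0 then 1 else 0) := by
              simp only [Finset.mul_sum]
              apply Finset.sum_congr rfl; intro j _
              apply Finset.sum_congr rfl; intro j' _
              ring
    calc |∑ k ∈ Finset.Icc 1 N, ∑ l ∈ Finset.Icc 1 N,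
          (if l = k then 0 else (c N k * c N l) * W k l)|
        ≤ ∑ k ∈ Finset.Icc 1 N, ∑ l ∈ Finset.Icc 1 N,
            |if l = k then 0 else (c N k * c N l) * W k l| := by
          refine (Finset.abs_sum_le_sum_abs _ _).trans ?_
          exact Finset.sum_le_sum fun k _ => Finset.abs_sum_le_sum_abs _ _
      _ ≤ ∑ k ∈ Finset.Icc 1 N, ∑ l ∈ Finset.Icc 1 N,
            (C * ∑ j ∈ Finset.Icc 1 d, ∑ j' ∈ Finset.Icc 1 d,
              c N k * c N l * (if k ≠ l ∧ (j : ℤ) * n k - (j' : ℤ) * n l = 0 then 1 else 0)) :=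
          Finset.sum_le_sum fun k _ => Finset.sum_le_sum fun l _ => hterm k l
      _ = C * ∑ k ∈ Finset.Icc 1 N, ∑ l ∈ Finset.Icc 1 N,
            ∑ j ∈ Finset.Icc 1 d, ∑ j' ∈ Finset.Icc 1 d,
              c N k * c N l * (if k ≠ l ∧ (j : ℤ) * n k - (j' : ℤ) * n l = 0 then 1 else 0) := by
          rw [Finset.mul_sum]
          exact Finset.sum_congr rfl fun k _ => (Finset.mul_sum _ _ _).symm
  -- target identification
  have hT : (1 / 2 : ℝ) * ∑ j ∈ Finset.Icc 1 d, (a j ^ 2 + b j ^ 2) = T := by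
    rw [hTdef, Finset.mul_sum]
    exact Finset.sum_congr rfl fun j _ => by ring
  rw [hT]
  -- the limit
  rw [Metric.tendsto_atTop]
  intro ε hε
  have hev := (hhom d (ε / (2 * C)) (by positivity)).and (hh.eventually_ge_atTop 1)
  rw [eventually_atTop] at hev
  obtain ⟨N₀, hN₀⟩ := hev
  refine ⟨N₀, fun N hN => ?_⟩
  obtain ⟨hS, hh1⟩ := hN₀ N hN
  set hN' : ℝ := ∑ k ∈ Finset.Icc 1 N, c N k ^ 2 with hhdef
  have hhpos : 0 < hN' := lt_of_lt_of_le one_pos hh1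
  have hkey : |(∫ x in Set.Ico (0:ℝ) 1,
      (∑ k ∈ Finset.Icc 1 N, c N k * trigPoly d a b ((n k : ℝ) * x)) ^ 2) - T * hN'|
      ≤ (ε / 2) * hN' := by
    rw [hmain N, hsplit N]
    refine (hbound N).trans ?_
    calc C * ∑ k ∈ Finset.Icc 1 N, ∑ l ∈ Finset.Icc 1 N,
          ∑ j ∈ Finset.Icc 1 d, ∑ j' ∈ Finset.Icc 1 d,
            c N k * c N l * (if k ≠ l ∧ (j : ℤ) * n k - (j' : ℤ) * n l = 0 then 1 else 0)
        ≤ C * ((ε / (2 * C)) * hN') := mul_le_mul_of_nonneg_left hS hC.le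
      _ = (ε / 2) * hN' := by field_simp
  rw [Real.dist_eq]
  have : (∫ x in Set.Ico (0:ℝ) 1,
      (∑ k ∈ Finset.Icc 1 N, c N k * trigPoly d a b ((n k : ℝ) * x)) ^ 2) / hN' - T
      = ((∫ x in Set.Ico (0:ℝ) 1,
        (∑ k ∈ Finset.Icc 1 N, c N k * trigPoly d a b ((n k : ℝ) * x)) ^ 2) - T * hN') / hN' := by
    field_simp
  rw [this, abs_div, abs_of_pos hhpos]
  calc |(∫ x in Set.Ico (0:ℝ) 1,
        (∑ k ∈ Finset.Icc 1 N, c N k * trigPoly d a b ((n k : ℝ) * x)) ^ 2) - T * hN'| / hN'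
      ≤ ((ε / 2) * hN') / hN' := by gcongr
    _ = ε / 2 := by
        rw [mul_div_assoc, div_self hhpos.ne', mul_one]
    _ < ε := by linarith
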